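/- Let $Q, B, P_c, \gamma_0, H > 0$ and $r > 0$ be fixed. The function $\phi(p_1) = \frac{Q(p_1 + P_c)}{B \log_2\left(1 + \frac{p_1 \gamma_0}{H^2 + r^2}\right)}$ defined for $p_1 > 0$ is quasiconvex, and if $P_c = 0$ then $\phi$ is strictly increasing on $(0,\infty)$ with $\lim_{p_1 \to 0^+} \phi(p_1) = \frac{Q(H^2 + r^2)\ln 2}{B \gamma_0}$. -/

import Mathlib

open Real Filter

/-- `φ(p₁) = Q(p₁ + P_c)/(B log₂(1 + p₁γ₀/(H² + r²)))` on `p₁ > 0` is quasiconvex, and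
if `P_c = 0` then `φ` is strictly increasing on `(0,∞)` with
`lim_{p₁→0⁺} φ(p₁) = Q(H² + r²) ln 2 / (B γ₀)`. -/
theorem stmt10 (Q B Pc γ₀ H r : ℝ) (hQ : 0 < Q) (hB : 0 < B) (hPc : 0 ≤ Pc) (hγ : 0 < γ₀)
    (hH : 0 < H) (hr : 0 < r)
    (φ : ℝ → ℝ)
    (hφ : ∀ p₁, φ p₁ = Q * (p₁ + Pc) / (B * Real.logb 2 (1 + p₁ * γ₀ / (H ^ 2 + r ^ 2)))) :
    QuasiconvexOn ℝ (Set.Ioi 0) φ ∧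
      (Pc = 0 → StrictMonoOn φ (Set.Ioi 0) ∧
        Tendsto φ (nhdsWithin 0 (Set.Ioi 0))
          (nhds (Q * (H ^ 2 + r ^ 2) * Real.log 2 / (B * γ₀)))) := by
  have hS : (0:ℝ) < H ^ 2 + r ^ 2 := by positivity
  set S : ℝ := H ^ 2 + r ^ 2 with hSdef
  set c : ℝ := γ₀ / S with hcdef
  have hc : 0 < c := div_pos hγ hS
  have hL2 : (0:ℝ) < Real.log 2 := Real.log_pos (by norm_num)
  -- rewrite φ
  have hφ' : ∀ p, φ p = Q * (p + Pc) / (B * (Real.log (1 + p * c) / Real.log 2)) := by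
    intro p
    rw [hφ p, Real.logb]
    rw [hcdef]
    ring_nf
  have hlogpos : ∀ p : ℝ, 0 < p → 0 < Real.log (1 + p * c) := by
    intro p hp
    apply Real.log_pos
    nlinarith [mul_pos hp hc]
  -- strict concavity of p ↦ log (1 + p * c) on Ici 0
  have hconc : StrictConcaveOn ℝ (Set.Ici 0) (fun p : ℝ => Real.log (1 + p * c)) := by
    constructor
    · exact convex_Ici 0
    · intro x hx y hy hxy a b ha hb hab
      have hx' : (0:ℝ) < 1 + x * c := by
        have : (0:ℝ) ≤ x * c := mul_nonneg hx hc.le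
        linarith
      have hy' : (0:ℝ) < 1 + y * c := by
        have : (0:ℝ) ≤ y * c := mul_nonneg hy hc.le
        linarith
      have hne : (1 + x * c) ≠ (1 + y * c) := by
        intro h
        apply hxy
        have h' : x * c = y * c := by linarith
        exact mul_right_cancel₀ hc.ne' h'
      have key := strictConcaveOn_log_Ioi.2 (Set.mem_Ioi.2 hx') (Set.mem_Ioi.2 hy') hne ha hb hab
      have heq : a • (1 + x * c) + b • (1 + y * c) = 1 + (a • x + b • y) * c := by
        simp only [smul_eq_mul]
        nlinarith [hab]
      rwa [heq] at key
  have hconcOn : ConcaveOn ℝ (Set.Ici 0) (fun p : ℝ => Real.log (1 + p * c)) :=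
    hconc.concaveOn
  constructor
  · -- Quasiconvexity
    intro t
    rcases lt_or_ge t 0 with ht | ht
    · have hsets : {x | x ∈ Set.Ioi 0 ∧ φ x ≤ t} = (∅ : Set ℝ) := by
        rw [Set.eq_empty_iff_forall_notMem]
        rintro x ⟨hx, hxt⟩
        have hx : (0:ℝ) < x := hx
        have hφx : 0 < φ x := by
          rw [hφ' x]
          have h1 : 0 < Q * (x + Pc) := by positivity
          have h2 : 0 < B * (Real.log (1 + x * c) / Real.log 2) := by
            have := hlogpos x hx
            positivity
          positivity
        linarith
      rw [hsets]
      exact convex_empty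
    · -- t ≥ 0 : sublevel set is the sublevel set of a convex function
      have hgconv : ConvexOn ℝ (Set.Ici 0)
          (fun x : ℝ => (Q * x + Q * Pc) - (t * B / Real.log 2) * Real.log (1 + x * c)) := by
        have haff : ConvexOn ℝ (Set.Ici 0) (fun x : ℝ => Q * x + Q * Pc) := by
          apply ConvexOn.add_const
          exact (convexOn_id (convex_Ici 0)).smul hQ.le
        have hk : (0:ℝ) ≤ t * B / Real.log 2 := by positivity
        have hsub := haff.sub (hconcOn.smul hk)
        exact hsub
      have hconvset := (hgconv.subset (Set.Ioi_subset_Ici_self) (convex_Ioi 0)).convex_le 0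
      have hsets : {x | x ∈ Set.Ioi 0 ∧ φ x ≤ t} =
          {x ∈ Set.Ioi 0 |
            (fun x : ℝ => (Q * x + Q * Pc) - (t * B / Real.log 2) * Real.log (1 + x * c)) x ≤ 0} := by
        ext x
        simp only [Set.mem_sep_iff, Set.mem_setOf_eq, Set.mem_Ioi]
        constructor
        · rintro ⟨hx, hxt⟩
          refine ⟨hx, ?_⟩
          rw [hφ' x] at hxt
          have hD : 0 < B * (Real.log (1 + x * c) / Real.log 2) := by
            have := hlogpos x hx
            positivity
          rw [div_le_iff₀ hD] at hxt
          have heq : t * (B * (Real.log (1 + x * c) / Real.log 2))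
              = t * B / Real.log 2 * Real.log (1 + x * c) := by ring
          rw [heq] at hxt
          linarith [hxt]
        · rintro ⟨hx, hxt⟩
          refine ⟨hx, ?_⟩
          rw [hφ' x]
          have hD : 0 < B * (Real.log (1 + x * c) / Real.log 2) := by
            have := hlogpos x hx
            positivity
          rw [div_le_iff₀ hD]
          have heq : t * (B * (Real.log (1 + x * c) / Real.log 2))
              = t * B / Real.log 2 * Real.log (1 + x * c) := by ring
          rw [heq]
          linarith [hxt]
      rw [hsets]
      exact hconvset
  · intro hPc0
    subst hPc0
    have hφ'' : ∀ p, φ p = (Q * Real.log 2 / B) * (p / Real.log (1 + p * c)) := by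
      intro p
      rw [hφ' p]
      field_simp
      ring
    constructor
    · -- strict monotonicity
      intro x hx y hy hxy
      have hx : (0:ℝ) < x := hx
      have hy : (0:ℝ) < y := hy
      have hLx := hlogpos x hx
      have hLy := hlogpos y hy
      -- key : x * log (1 + y c) < y * log (1 + x c)
      have key : x * Real.log (1 + y * c) < y * Real.log (1 + x * c) := by
        have ha : (0:ℝ) < 1 - x / y := by
          rw [sub_pos, div_lt_one hy]; exact hxy
        have hb : (0:ℝ) < x / y := div_pos hx hy
        have hab : (1 - x / y) + x / y = 1 := by ring
        have h0y : (0:ℝ) ≠ y := hy.ne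
        have hcc := hconc.2 (Set.self_mem_Ici) (Set.mem_Ici.2 hy.le) h0y ha hb hab
        simp only [smul_eq_mul, mul_zero, zero_mul, zero_add, add_zero, Real.log_one] at hcc
        have heq : x / y * y = x := div_mul_cancel₀ x hy.ne'
        rw [heq] at hcc
        -- hcc : (1 - x/y) * 0 + x/y * log (1 + y*c) < log (1 + x*c)
        have h2 : x / y * Real.log (1 + y * c) < Real.log (1 + x * c) := by nlinarith [hcc]
        calc x * Real.log (1 + y * c) = (x / y * Real.log (1 + y * c)) * y := by
              field_simp
          _ < Real.log (1 + x * c) * y := mul_lt_mul_of_pos_right h2 hy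
          _ = y * Real.log (1 + x * c) := by ring
      rw [hφ'' x, hφ'' y]
      have hk : (0:ℝ) < Q * Real.log 2 / B := by positivity
      apply mul_lt_mul_of_pos_left _ hk
      rw [div_lt_div_iff₀ hLx hLy]
      linarith [key]
    · -- limit
      have hderiv : HasDerivAt (fun p : ℝ => Real.log (1 + p * c)) c 0 := by
        have h1 : HasDerivAt (fun p : ℝ => 1 + p * c) c 0 := by
          simpa using ((hasDerivAt_id (0:ℝ)).mul_const c).const_add 1
        have h2 : (1 : ℝ) + 0 * c ≠ 0 := by norm_num
        simpa using h1.log h2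
      have hslope : Tendsto (fun p : ℝ => Real.log (1 + p * c) / p)
          (nhdsWithin 0 (Set.Ioi 0)) (nhds c) := by
        have hts := hasDerivAt_iff_tendsto_slope.mp hderiv
        have hmono : nhdsWithin (0:ℝ) (Set.Ioi 0) ≤ nhdsWithin 0 {(0:ℝ)}ᶜ :=
          nhdsWithin_mono 0 (fun x hx => ne_of_gt hx)
        have h2 := hts.mono_left hmono
        refine h2.congr' ?_
        filter_upwards [self_mem_nhdsWithin] with p hp
        have hp : (0:ℝ) < p := hp
        simp [slope_def_field]
      have hinv : Tendsto (fun p : ℝ => p / Real.log (1 + p * c))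
          (nhdsWithin 0 (Set.Ioi 0)) (nhds c⁻¹) := by
        have h3 := hslope.inv₀ hc.ne'
        refine h3.congr' ?_
        filter_upwards [self_mem_nhdsWithin] with p hp
        rw [inv_div]
      have hlim := hinv.const_mul (Q * Real.log 2 / B)
      have hval : (Q * Real.log 2 / B) * c⁻¹ = Q * S * Real.log 2 / (B * γ₀) := by
        rw [hcdef]
        field_simp
      rw [hval] at hlim
      refine hlim.congr' ?_
      filter_upwards [self_mem_nhdsWithin] with p hp
      exact (hφ'' p).symm
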